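/- Let (u_n) be a weak greedy sequence in 𝒦 with weakness parameter γ ∈ (0,1], let θ ∈ (0,1), and set q := ⌈2(γθ)^{-1}⌉². Then for all n, m ≥ 1: if σ_{n+qm}(𝒦)_H ≥ θ σ_n(𝒦)_H, then σ_n(𝒦)_H ≤ q^{1/2} d_m(𝒦)_H. -/

import Mathlib

open Metric

lemma nat_key (κ : ℕ) (hκ : 3 ≤ κ) : 3 * κ ^ 2 * (κ + 1) < 2 ^ (κ ^ 2) := by
  have h1 : κ ≤ 2 ^ (κ - 1) := by
    have := Nat.lt_two_pow_self (n := κ - 1); omega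
  have h2 : κ ^ 3 ≤ 2 ^ (3 * (κ - 1)) := by
    calc κ ^ 3 ≤ (2 ^ (κ - 1)) ^ 3 := Nat.pow_le_pow_left h1 3
      _ = 2 ^ (3 * (κ - 1)) := by rw [← pow_mul, Nat.mul_comm]
  have hp : 0 < 2 ^ (3 * (κ - 1)) := Nat.pow_pos (by norm_num)
  have h4 : 3 * κ ^ 2 * (κ + 1) < 2 ^ (3 * (κ - 1) + 3) := by
    rw [pow_add]
    nlinarith [h2, hp, hκ]
  have h5 : 3 * (κ - 1) + 3 ≤ κ ^ 2 := by
    have : 3 * κ ≤ κ ^ 2 := by nlinarith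
    omega
  exact h4.trans_le (Nat.pow_le_pow_right (by norm_num) h5)

lemma one_add_inv_pow_le (q : ℕ) (hq : 1 ≤ q) : (1 + 1 / (q : ℝ)) ^ q ≤ 3 := by
  have hq0 : (0 : ℝ) < q := by exact_mod_cast hq
  have h1 : (1 : ℝ) + 1 / q ≤ Real.exp (1 / q) := by
    have := Real.add_one_le_exp (1 / (q : ℝ)); linarith
  calc (1 + 1 / (q : ℝ)) ^ q ≤ (Real.exp (1 / q)) ^ q :=
        pow_le_pow_left₀ (by positivity) h1 q
    _ = Real.exp (q * (1 / q)) := (Real.exp_nat_mul _ q).symm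
    _ = Real.exp 1 := by rw [mul_one_div, div_self (ne_of_gt hq0)]
    _ ≤ 3 := by linarith [Real.exp_one_lt_d9]

/-- Hadamard's inequality for real matrices, rows version. -/
lemma hadamard_ineq {k : ℕ} (M : Matrix (Fin k) (Fin k) ℝ) :
    |M.det| ≤ ∏ i, Real.sqrt (∑ j, M i j ^ 2) := by
  rcases Nat.eq_zero_or_pos k with hk | hk
  · subst hk
    simp [Matrix.det_fin_zero]
  haveI : Nonempty (Fin k) := Fin.pos_iff_nonempty.mp hk
  set ψ := WithLp.linearEquiv 2 ℝ (Fin k → ℝ) with hψ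
  set r : Fin k → EuclideanSpace ℝ (Fin k) := fun i => ψ.symm (M i) with hr
  have hnorm : ∀ i, ‖r i‖ = Real.sqrt (∑ j, M i j ^ 2) := by
    intro i
    rw [EuclideanSpace.norm_eq]
    congr 1
    refine Finset.sum_congr rfl fun j _ => ?_
    rw [Real.norm_eq_abs, sq_abs]
    rfl
  have hRHS : 0 ≤ ∏ i, Real.sqrt (∑ j, M i j ^ 2) :=
    Finset.prod_nonneg fun i _ => Real.sqrt_nonneg _
  haveI : WellFoundedLT (Fin k) := inferInstance
  by_cases hli : LinearIndependent ℝ r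
  · set e := InnerProductSpace.gramSchmidtNormed ℝ r with he_def
    have he : Orthonormal ℝ e := InnerProductSpace.gramSchmidtNormed_orthonormal hli
    have htri : ∀ i j : Fin k, i < j → (inner ℝ (e j) (r i) : ℝ) = 0 := by
      intro i j hij
      have h0 : (inner ℝ (InnerProductSpace.gramSchmidt ℝ r j) (r i) : ℝ) = 0 :=
        InnerProductSpace.gramSchmidt_inv_triangular (𝕜 := ℝ) r hij
      rw [he_def]
      simp [InnerProductSpace.gramSchmidtNormed, inner_smul_left, h0]
    let b := basisOfLinearIndependentOfCardEqFinrank he.linearIndependent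
      (by simp [finrank_euclideanSpace])
    have hb : ⇑b = e := coe_basisOfLinearIndependentOfCardEqFinrank _ _
    let ob := b.toOrthonormalBasis (by rwa [hb])
    have hob : ∀ j, ob j = e j := by
      intro j
      have : ob.toBasis = b := b.toBasis_toOrthonormalBasis _
      rw [← hb]
      calc ob j = ob.toBasis j := (ob.coe_toBasis ▸ rfl)
        _ = b j := by rw [this]
    have hrepr : ∀ x : EuclideanSpace ℝ (Fin k), ∑ j, (inner ℝ (e j) x : ℝ) • e j = x := by
      intro x
      have := ob.sum_repr' x
      simp_rw [hob] at this
      exact this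
    set L : Matrix (Fin k) (Fin k) ℝ := Matrix.of fun i j => (inner ℝ (e j) (r i) : ℝ) with hL
    set Em : Matrix (Fin k) (Fin k) ℝ := Matrix.of fun j c => ψ (e j) c with hEm
    have hME : M = L * Em := by
      ext i c
      rw [Matrix.mul_apply]
      have h2 : ψ (∑ j, (inner ℝ (e j) (r i) : ℝ) • e j) = ψ (r i) := congrArg ψ (hrepr (r i))
      rw [map_sum] at h2
      simp only [map_smul] at h2
      have h3 : (∑ j, (inner ℝ (e j) (r i) : ℝ) • ψ (e j)) c = ψ (r i) c := by rw [h2]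
      rw [Finset.sum_apply] at h3
      simp only [Pi.smul_apply, smul_eq_mul] at h3
      have h4 : ψ (r i) = M i := ψ.apply_symm_apply (M i)
      rw [h4] at h3
      exact h3.symm
    have hEE : Em * Em.transpose = 1 := by
      ext j j'
      rw [Matrix.mul_apply]
      have h5 : (inner ℝ (e j) (e j') : ℝ) = if j = j' then 1 else 0 :=
        orthonormal_iff_ite.mp he j j'
      rw [PiLp.inner_apply] at h5
      simp only [RCLike.inner_apply, starRingEnd_apply, star_trivial] at h5
      simp only [hEm, Matrix.of_apply, Matrix.transpose_apply, Matrix.one_apply]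
      convert h5 using 2
      exact mul_comm _ _
    have hdetE : |Em.det| = 1 := by
      have h6 := congrArg Matrix.det hEE
      rw [Matrix.det_mul, Matrix.det_transpose, Matrix.det_one] at h6
      have h7 : Em.det ^ 2 = 1 := by nlinarith
      have h8 : |Em.det| ^ 2 = 1 := by rw [sq_abs]; exact h7
      nlinarith [abs_nonneg Em.det, h8]
    have hdetL : L.det = ∏ i, L i i :=
      Matrix.det_of_lowerTriangular L (fun i j hij => htri i j hij)
    calc |M.det| = |L.det| * |Em.det| := by rw [hME, Matrix.det_mul, abs_mul]
      _ = |∏ i, L i i| := by rw [hdetE, mul_one, hdetL]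
      _ = ∏ i, |L i i| := Finset.abs_prod _ _
      _ ≤ ∏ i, ‖r i‖ := Finset.prod_le_prod (fun i _ => abs_nonneg _) (fun i _ => by
          have h9 := abs_real_inner_le_norm (e i) (r i)
          rw [he.1 i, one_mul] at h9
          exact h9)
      _ = ∏ i, Real.sqrt (∑ j, M i j ^ 2) := by simp_rw [hnorm]
  · obtain ⟨g, hg0, i₀, hi₀⟩ := Fintype.not_linearIndependent_iff.mp hli
    have hdet : M.det = 0 := by
      rw [← Matrix.exists_vecMul_eq_zero_iff]
      refine ⟨g, fun h => hi₀ (by rw [h]; rfl), ?_⟩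
      funext j
      have h2 : ψ (∑ i, g i • r i) = 0 := by rw [hg0]; simp
      rw [map_sum] at h2
      simp only [map_smul] at h2
      have h3 : (∑ i, g i • ψ (r i)) j = 0 := by rw [h2]; rfl
      rw [Finset.sum_apply] at h3
      simpa [Matrix.vecMul, dotProduct, hr] using h3
    rw [hdet, abs_zero]
    exact hRHS

lemma det_zero_of_rows_in_small {N m : ℕ} (M : Matrix (Fin N) (Fin N) ℝ)
    (W : Submodule ℝ (Fin N → ℝ)) (hW : Module.finrank ℝ W ≤ m)
    (s : Finset (Fin N)) (hs : m < s.card) (hrows : ∀ i ∈ s, M i ∈ W) :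
    M.det = 0 := by
  classical
  rw [← Matrix.exists_vecMul_eq_zero_iff]
  set v : {i // i ∈ s} → W := fun i => ⟨M i, hrows i i.2⟩ with hv
  have hnli : ¬ LinearIndependent ℝ v := by
    intro h
    have h2 := h.fintype_card_le_finrank
    rw [Fintype.card_coe] at h2
    omega
  obtain ⟨g, hg, i₀, hi₀⟩ := Fintype.not_linearIndependent_iff.mp hnli
  have h1 : (∑ i : {i // i ∈ s}, g i • M i.1) = (0 : Fin N → ℝ) := by
    have h3 := congrArg W.subtype hg
    rw [map_sum] at h3
    simp only [map_smul] at h3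
    simpa using h3
  refine ⟨fun i => if h : i ∈ s then g ⟨i, h⟩ else 0, ?_, ?_⟩
  · intro hzero
    apply hi₀
    have h4 := congrFun hzero i₀.1
    simpa [i₀.2] using h4
  · funext j
    have h5 : (∑ i : {i // i ∈ s}, g i • M i.1) j = 0 := by rw [h1]; rfl
    rw [Finset.sum_apply] at h5
    simp only [Pi.smul_apply, smul_eq_mul] at h5
    show (Matrix.vecMul _ M) j = 0
    rw [Matrix.vecMul, dotProduct]
    rw [← Finset.sum_subset (Finset.subset_univ s)
      (fun i _ hi => by simp [dif_neg hi])]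
    rw [← Finset.sum_attach s (fun i => (if h : i ∈ s then g ⟨i, h⟩ else 0) * M i j)]
    rw [← h5]
    refine Finset.sum_congr rfl fun i _ => ?_
    rw [dif_pos i.2]

lemma det_bound {N m : ℕ} (B C : Matrix (Fin N) (Fin N) ℝ)
    (W : Submodule ℝ (Fin N → ℝ)) (hW : Module.finrank ℝ W ≤ m)
    (hBW : ∀ i, B i ∈ W)
    (b c t : ℝ) (hb0 : 0 ≤ b) (hc0 : 0 ≤ c) (ht : 1 ≤ t)
    (hb : ∀ i, Real.sqrt (∑ j, B i j ^ 2) ≤ b)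
    (hc : ∀ i, Real.sqrt (∑ j, C i j ^ 2) ≤ c) :
    |(B + C).det| ≤ t ^ m * (b / t + c) ^ N := by
  classical
  have ht0 : 0 < t := lt_of_lt_of_le one_pos ht
  have hbt : 0 ≤ b / t := div_nonneg hb0 ht0.le
  have key : (B + C).det = ∑ s : Finset (Fin N), (Matrix.of (s.piecewise B C)).det :=
    (Matrix.detRowAlternating (R := ℝ) (n := Fin N)).toMultilinearMap.map_add_univ B C
  have hterm : ∀ s : Finset (Fin N),
      |(Matrix.of (s.piecewise B C)).det| ≤
        t ^ m * ((b / t) ^ s.card * c ^ (Finset.univ \ s).card) := by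
    intro s
    rcases le_or_gt s.card m with hsm | hsm
    · have h1 := hadamard_ineq (Matrix.of (s.piecewise B C))
      have h2 : ∏ i, Real.sqrt (∑ j, (Matrix.of (s.piecewise B C)) i j ^ 2) ≤
          ∏ i, s.piecewise (fun _ => b) (fun _ => c) i := by
        refine Finset.prod_le_prod (fun i _ => Real.sqrt_nonneg _) (fun i _ => ?_)
        by_cases hi : i ∈ s
        · simpa [Finset.piecewise, hi] using hb i
        · simpa [Finset.piecewise, hi] using hc i
      have h3 : ∏ i, s.piecewise (fun _ => b) (fun _ => c) i =
          b ^ s.card * c ^ (Finset.univ \ s).card := by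
        rw [Finset.prod_piecewise]
        simp [Finset.univ_inter, Finset.prod_const]
      have h4 : b ^ s.card * c ^ (Finset.univ \ s).card ≤
          t ^ m * ((b / t) ^ s.card * c ^ (Finset.univ \ s).card) := by
        have hbt2 : b ^ s.card = t ^ s.card * (b / t) ^ s.card := by
          rw [← mul_pow, mul_div_cancel₀ _ (ne_of_gt ht0)]
        rw [hbt2, mul_assoc]
        refine mul_le_mul_of_nonneg_right (pow_le_pow_right₀ ht hsm)
          (by positivity)
      calc |(Matrix.of (s.piecewise B C)).det| ≤ _ := h1
        _ ≤ _ := h2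
        _ = _ := h3
        _ ≤ _ := h4
    · have h0 : (Matrix.of (s.piecewise B C)).det = 0 := by
        refine det_zero_of_rows_in_small _ W hW s hsm (fun i hi => ?_)
        have h6 : Matrix.of (s.piecewise B C) i = B i := Finset.piecewise_eq_of_mem _ _ _ hi
        rw [h6]; exact hBW i
      rw [h0, abs_zero]
      positivity
  calc |(B + C).det| ≤ ∑ s : Finset (Fin N), |(Matrix.of (s.piecewise B C)).det| := by
        rw [key]; exact Finset.abs_sum_le_sum_abs _ _
    _ ≤ ∑ s : Finset (Fin N), t ^ m * ((b / t) ^ s.card * c ^ (Finset.univ \ s).card) :=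
        Finset.sum_le_sum (fun s _ => hterm s)
    _ = t ^ m * ∑ s : Finset (Fin N), ((b / t) ^ s.card * c ^ (Finset.univ \ s).card) := by
        rw [Finset.mul_sum]
    _ = t ^ m * (b / t + c) ^ N := by
        congr 1
        have hexp := Finset.prod_add (fun _ : Fin N => b / t) (fun _ : Fin N => c) Finset.univ
        simp only [Finset.prod_const, Finset.card_univ, Fintype.card_fin] at hexp
        rw [Finset.powerset_univ] at hexp
        exact hexp.symm

open Metric

variable {H : Type*} [NormedAddCommGroup H] [InnerProductSpace ℝ H] [CompleteSpace H]

/-- `greedySpace u n = H_n := span{u_1, …, u_n}` (with `u i` denoting `u_{i+1}`). -/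
noncomputable def greedySpace (u : ℕ → H) (n : ℕ) : Submodule ℝ H :=
  Submodule.span ℝ (u '' {i | i < n})

/-- Greedy error `σ_n(𝒦)_H := sup_{v∈𝒦} dist(v, H_n)`. -/
noncomputable def greedyErr (K : Set H) (u : ℕ → H) (n : ℕ) : ℝ :=
  ⨆ v : K, infDist (v : H) (greedySpace u n : Set H)

/-- A weak greedy sequence in `𝒦` with weakness parameter `γ`:
`dist(u_{n+1}, H_n) ≥ γ · sup_{v∈𝒦} dist(v, H_n)` for all `n ≥ 0`. -/
def IsWeakGreedy (K : Set H) (u : ℕ → H) (γ : ℝ) : Prop :=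
  (∀ n, u n ∈ K) ∧
    ∀ n, γ * greedyErr K u n ≤ infDist (u n) (greedySpace u n : Set H)

/-- Kolmogorov `n`-width
`d_n(𝒦)_H := inf {sup_{v∈𝒦} dist(v, V) : V ⊂ H subspace, dim V ≤ n}`. -/
noncomputable def kolWidth (K : Set H) (n : ℕ) : ℝ :=
  ⨅ V : {V : Submodule ℝ H // FiniteDimensional ℝ V ∧ Module.finrank ℝ V ≤ n},
    ⨆ v : K, infDist (v : H) ((V : Submodule ℝ H) : Set H)

section GreedyHelpers

lemma bddAbove_infDist_aux (K : Set H) (hK : IsCompact K) (S : Submodule ℝ H) :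
    BddAbove (Set.range fun v : K => infDist (v : H) (S : Set H)) := by
  obtain ⟨R, hR⟩ := isBounded_iff_forall_norm_le.mp hK.isBounded
  refine ⟨R, ?_⟩
  rintro x ⟨v, rfl⟩
  calc infDist (v : H) (S : Set H) ≤ dist (v : H) 0 :=
        infDist_le_dist_of_mem (by exact_mod_cast S.zero_mem)
    _ = ‖(v : H)‖ := by rw [dist_zero_right]
    _ ≤ R := hR _ v.2

lemma le_greedyErr (K : Set H) (hK : IsCompact K) (u : ℕ → H) (k : ℕ) {v : H} (hv : v ∈ K) :
    infDist v (greedySpace u k : Set H) ≤ greedyErr K u k :=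
  le_ciSup (bddAbove_infDist_aux K hK _) (⟨v, hv⟩ : K)

lemma greedyErr_nonneg (K : Set H) (hK : IsCompact K) (u : ℕ → H) (k : ℕ)
    (hne : K.Nonempty) : 0 ≤ greedyErr K u k := by
  obtain ⟨v, hv⟩ := hne
  exact le_trans infDist_nonneg (le_greedyErr K hK u k hv)

lemma greedySpace_mono (u : ℕ → H) {k l : ℕ} (h : k ≤ l) :
    greedySpace u k ≤ greedySpace u l :=
  Submodule.span_mono (Set.image_mono (f := u) fun i hi => lt_of_lt_of_le hi h)

lemma greedyErr_anti (K : Set H) (hK : IsCompact K) (u : ℕ → H) {k l : ℕ} (h : k ≤ l) :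
    greedyErr K u l ≤ greedyErr K u k := by
  apply ciSup_mono (bddAbove_infDist_aux K hK _)
  intro v
  exact infDist_le_infDist_of_subset
    (SetLike.coe_subset_coe.mpr (greedySpace_mono u h))
    ⟨0, by exact_mod_cast (greedySpace u k).zero_mem⟩

lemma norm_sub_orthProj_eq_infDist (S : Submodule ℝ H) [S.HasOrthogonalProjection] (x : H) :
    ‖x - S.orthogonalProjection x‖ = infDist x (S : Set H) := by
  rw [show ((S.orthogonalProjection x : S) : H) = S.starProjection x from rfl,
    Submodule.starProjection_minimal, infDist_eq_iInf]
  exact iInf_congr fun v => (dist_eq_norm _ _).symm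

lemma finiteDimensional_greedySpace (u : ℕ → H) (i : ℕ) :
    FiniteDimensional ℝ (greedySpace u i) :=
  FiniteDimensional.span_of_finite ℝ ((Set.finite_Iio i).image u)

end GreedyHelpers
set_option maxHeartbeats 2000000 in
/-- conditional delayed comparison, Lemma 2.2 of [BCDDPW]: with
`q := ⌈2(γθ)⁻¹⌉²`, if `σ_{n+qm}(𝒦)_H ≥ θ σ_n(𝒦)_H` then `σ_n(𝒦)_H ≤ q^{1/2} d_m(𝒦)_H`. -/
theorem weakGreedy_conditional_delayed_comparison
    (K : Set H) (hK : IsCompact K) (u : ℕ → H) (γ : ℝ)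
    (hγ0 : 0 < γ) (hγ1 : γ ≤ 1) (hwg : IsWeakGreedy K u γ)
    (θ : ℝ) (hθ0 : 0 < θ) (hθ1 : θ < 1)
    (n m : ℕ) (hn : 1 ≤ n) (hm : 1 ≤ m)
    (hcond : θ * greedyErr K u n ≤ greedyErr K u (n + (⌈2 * (γ * θ)⁻¹⌉₊) ^ 2 * m)) :
    greedyErr K u n ≤ Real.sqrt ((⌈2 * (γ * θ)⁻¹⌉₊ : ℝ) ^ 2) * kolWidth K m := by
  classical
  obtain ⟨humem, hge⟩ := hwg
  set κ : ℕ := ⌈2 * (γ * θ)⁻¹⌉₊ with hκdef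
  rw [Real.sqrt_sq (by positivity : (0:ℝ) ≤ (κ : ℝ))]
  -- basic numeric facts
  have hγθ0 : 0 < γ * θ := mul_pos hγ0 hθ0
  have hγθ1 : γ * θ < 1 := by nlinarith
  have hκ3 : 3 ≤ κ := by
    have hx : 1 < (γ * θ)⁻¹ := (one_lt_inv₀ hγθ0).mpr hγθ1
    have h2 : (2 : ℝ) < 2 * (γ * θ)⁻¹ := by nlinarith
    have := Nat.lt_ceil.mpr (by exact_mod_cast h2 : ((2:ℕ) : ℝ) < 2 * (γ * θ)⁻¹)
    omega
  have hκpos : 0 < κ := by omega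
  have hκR : (3 : ℝ) ≤ (κ : ℝ) := by exact_mod_cast hκ3
  have hκR0 : (0 : ℝ) < (κ : ℝ) := by linarith
  have h2κ : 2 / (κ : ℝ) ≤ γ * θ := by
    have hle : 2 * (γ * θ)⁻¹ ≤ (κ : ℝ) := Nat.le_ceil _
    rw [div_le_iff₀ hκR0]
    calc (2 : ℝ) = 2 * (γ * θ)⁻¹ * (γ * θ) := by field_simp
      _ ≤ (κ : ℝ) * (γ * θ) := mul_le_mul_of_nonneg_right hle hγθ0.le
      _ = γ * θ * κ := by ring
  have hNm : Nonempty {V : Submodule ℝ H // FiniteDimensional ℝ V ∧ Module.finrank ℝ V ≤ m} :=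
    ⟨⟨⊥, inferInstance, by simp⟩⟩
  rcases K.eq_empty_or_nonempty with hKe | hKne
  · subst hKe
    haveI : IsEmpty ((∅ : Set H) : Type _) := by
      constructor; rintro ⟨v, hv⟩; exact hv
    have h1 : greedyErr (∅ : Set H) u n = 0 := Real.iSup_of_isEmpty _
    have h2 : kolWidth (∅ : Set H) m = 0 := by
      rw [kolWidth]
      haveI := hNm
      simp [Real.iSup_of_isEmpty, ciInf_const]
    rw [h1, h2, mul_zero]
  -- main case
  set σ := greedyErr K u n with hσdef
  have hσ0 : 0 ≤ σ := greedyErr_nonneg K hK u n hKne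
  have main : ∀ V : {V : Submodule ℝ H // FiniteDimensional ℝ V ∧ Module.finrank ℝ V ≤ m},
      σ ≤ (κ : ℝ) * ⨆ v : K, infDist (v : H) ((V : Submodule ℝ H) : Set H) := by
    rintro ⟨Vs, hVfd, hVrank⟩
    haveI := hVfd
    set D := ⨆ v : K, infDist (v : H) (Vs : Set H) with hDdef
    show σ ≤ (κ : ℝ) * D
    by_contra hcon
    push_neg at hcon
    -- setup
    have hD0 : 0 ≤ D := by
      obtain ⟨v, hv⟩ := hKne
      exact le_trans infDist_nonneg (le_ciSup (bddAbove_infDist_aux K hK Vs) (⟨v, hv⟩ : K))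
    have hσpos : 0 < σ := lt_of_le_of_lt (by positivity) hcon
    have hDκ : D ≤ σ / (κ : ℝ) := by
      rw [le_div_iff₀ hκR0]
      nlinarith [hcon]
    set N := κ ^ 2 * m with hNdef
    have hNpos : 0 < N := by positivity
    -- lower bound for the residuals
    have hβpos : 0 < 2 / (κ : ℝ) * σ := by positivity
    haveI hfd : ∀ i : ℕ, FiniteDimensional ℝ (greedySpace u i) :=
      finiteDimensional_greedySpace u
    -- the residual vectors
    have hyex : ∀ i : ℕ, ∃ y : H, (u i - y) ∈ greedySpace u i ∧ y ∈ (greedySpace u i)ᗮ := by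
      intro i
      haveI := hfd i
      exact ⟨u i - Submodule.orthogonalProjection (greedySpace u i) (u i),
        by simpa using (Submodule.orthogonalProjection (greedySpace u i) (u i)).2,
        Submodule.sub_starProjection_mem_orthogonal _⟩
    choose yv hyv1 hyv2 using hyex
    have hylb : ∀ i : Fin N, 2 / (κ : ℝ) * σ ≤ ‖yv (n + i)‖ := by
      intro i
      have h1 : infDist (u (n + i)) (greedySpace u (n + i) : Set H) ≤ ‖yv (n + i)‖ := by
        have := infDist_le_dist_of_mem
          (x := u (n + i)) (SetLike.mem_coe.mpr (hyv1 (n + i)))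
        calc infDist (u (n + i)) (greedySpace u (n + i) : Set H)
            ≤ dist (u (n + i)) (u (n + i) - yv (n + i)) := this
          _ = ‖yv (n + i)‖ := by rw [dist_eq_norm]; congr 1; abel
      have h2 : θ * σ ≤ greedyErr K u (n + i) := by
        calc θ * σ ≤ greedyErr K u (n + N) := hcond
          _ ≤ greedyErr K u (n + i) := greedyErr_anti K hK u (by omega)
      have h3 := hge (n + i)
      have h4 : γ * θ * σ ≤ infDist (u (n + i)) (greedySpace u (n + i) : Set H) := by
        nlinarith [h2, h3, hγ0.le]
      have h5 : 2 / (κ : ℝ) * σ ≤ γ * θ * σ := by nlinarith [h2κ, hσ0]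
      linarith
    have hyne : ∀ i : Fin N, yv (n + i) ≠ 0 := by
      intro i h0
      have := hylb i
      rw [h0, norm_zero] at this
      linarith
    -- the orthonormal system
    set ee : Fin N → H := fun j => (‖yv (n + j)‖⁻¹ : ℝ) • yv (n + j) with heedef
    have eperp : ∀ (j : Fin N) (z : H), z ∈ greedySpace u (n + j) → (inner ℝ (ee j) z : ℝ) = 0 := by
      intro j z hz
      rw [heedef]
      simp only [real_inner_smul_left]
      rw [(Submodule.mem_orthogonal' _ _).mp (hyv2 (n + j)) z hz, mul_zero]
    have emem : ∀ j : Fin N, ee j ∈ greedySpace u (n + j + 1) := by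
      intro j
      refine Submodule.smul_mem _ _ ?_
      have hyrw : yv (n + j) = u (n + j) - (u (n + j) - yv (n + j)) := by abel
      rw [hyrw]
      refine Submodule.sub_mem _ ?_ ?_
      · exact Submodule.subset_span ⟨n + j, by simp, rfl⟩
      · exact greedySpace_mono u (Nat.le_succ _) (hyv1 (n + j))
    have heon : Orthonormal ℝ ee := by
      constructor
      · intro j
        exact norm_smul_inv_norm (𝕜 := ℝ) (hyne j)
      · intro i j hij
        rcases lt_or_gt_of_ne hij with h | h
        · have h1 : ee i ∈ greedySpace u (n + j) := by
            refine greedySpace_mono u ?_ (emem i)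
            omega
          rw [real_inner_comm]
          exact eperp j (ee i) h1
        · have h1 : ee j ∈ greedySpace u (n + i) := by
            refine greedySpace_mono u ?_ (emem j)
            omega
          exact eperp i (ee j) h1
    -- projections onto V and H_n
    have hwex : ∀ i : Fin N, ∃ w ∈ Vs, ‖u (n + i) - w‖ ≤ D := by
      intro i
      refine ⟨Submodule.orthogonalProjection Vs (u (n + i)), Submodule.coe_mem _, ?_⟩
      rw [norm_sub_orthProj_eq_infDist]
      exact le_ciSup (bddAbove_infDist_aux K hK Vs) (⟨u (n + i), humem _⟩ : K)
    choose wv hwv1 hwv2 using hwex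
    have hpex : ∀ i : Fin N, ∃ p ∈ greedySpace u n, ‖u (n + i) - p‖ ≤ σ := by
      intro i
      haveI := hfd n
      refine ⟨Submodule.orthogonalProjection (greedySpace u n) (u (n + i)), Submodule.coe_mem _, ?_⟩
      rw [norm_sub_orthProj_eq_infDist]
      exact le_greedyErr K hK u n (humem _)
    choose pv hpv1 hpv2 using hpex
    -- matrices
    set Amat : Matrix (Fin N) (Fin N) ℝ :=
      Matrix.of fun i j => (inner ℝ (ee j) (u (n + i)) : ℝ) with hAdef
    set Bmat : Matrix (Fin N) (Fin N) ℝ :=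
      Matrix.of fun i j => (inner ℝ (ee j) (wv i) : ℝ) with hBdef
    set Cmat : Matrix (Fin N) (Fin N) ℝ :=
      Matrix.of fun i j => (inner ℝ (ee j) (u (n + i) - wv i) : ℝ) with hCdef
    have hABC : Amat = Bmat + Cmat := by
      ext i j
      simp only [hAdef, hBdef, hCdef, Matrix.add_apply, Matrix.of_apply]
      rw [← inner_add_right]
      congr 1
      abel
    -- the subspace W
    set T : H →ₗ[ℝ] (Fin N → ℝ) :=
      LinearMap.pi (fun j => ((innerSL ℝ (ee j)).toLinearMap)) with hTdef
    set W : Submodule ℝ (Fin N → ℝ) := Vs.map T with hWdef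
    have hWrank : Module.finrank ℝ W ≤ m :=
      le_trans (Submodule.finrank_map_le T Vs) hVrank
    have hBW : ∀ i, Bmat i ∈ W := by
      intro i
      refine ⟨wv i, hwv1 i, ?_⟩
      funext j
      simp [hTdef, hBdef]
    -- row bounds
    have enorm : ∀ f : Fin N → ℝ,
        ‖(WithLp.linearEquiv 2 ℝ (Fin N → ℝ)).symm f‖ = Real.sqrt (∑ j, f j ^ 2) := by
      intro f
      rw [EuclideanSpace.norm_eq]
      congr 1
      refine Finset.sum_congr rfl fun j _ => ?_
      rw [Real.norm_eq_abs, sq_abs]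
      rfl
    have bessel : ∀ z : H, ∑ j : Fin N, (inner ℝ (ee j) z : ℝ) ^ 2 ≤ ‖z‖ ^ 2 := by
      intro z
      have hb := heon.sum_inner_products_le (𝕜 := ℝ) (x := z) (s := Finset.univ)
      simpa [Real.norm_eq_abs, sq_abs] using hb
    have rowC : ∀ i : Fin N, Real.sqrt (∑ j, Cmat i j ^ 2) ≤ D := by
      intro i
      have h1 : ∑ j : Fin N, Cmat i j ^ 2 ≤ ‖u (n + i) - wv i‖ ^ 2 := bessel _
      calc Real.sqrt (∑ j, Cmat i j ^ 2) ≤ Real.sqrt (‖u (n + i) - wv i‖ ^ 2) :=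
            Real.sqrt_le_sqrt h1
        _ = ‖u (n + i) - wv i‖ := Real.sqrt_sq (norm_nonneg _)
        _ ≤ D := hwv2 i
    have rowA : ∀ i : Fin N, Real.sqrt (∑ j, Amat i j ^ 2) ≤ σ := by
      intro i
      have hA2 : ∀ j : Fin N, Amat i j = (inner ℝ (ee j) (u (n + i) - pv i) : ℝ) := by
        intro j
        rw [inner_sub_right]
        have : (inner ℝ (ee j) (pv i) : ℝ) = 0 :=
          eperp j _ (greedySpace_mono u (Nat.le_add_right n j) (hpv1 i))
        simp [hAdef, this]
      have h1 : ∑ j : Fin N, Amat i j ^ 2 ≤ ‖u (n + i) - pv i‖ ^ 2 := by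
        calc ∑ j : Fin N, Amat i j ^ 2
            = ∑ j : Fin N, (inner ℝ (ee j) (u (n + i) - pv i) : ℝ) ^ 2 := by
              refine Finset.sum_congr rfl fun j _ => by rw [hA2 j]
          _ ≤ _ := bessel _
      calc Real.sqrt (∑ j, Amat i j ^ 2) ≤ Real.sqrt (‖u (n + i) - pv i‖ ^ 2) :=
            Real.sqrt_le_sqrt h1
        _ = ‖u (n + i) - pv i‖ := Real.sqrt_sq (norm_nonneg _)
        _ ≤ σ := hpv2 i
    have rowB : ∀ i : Fin N, Real.sqrt (∑ j, Bmat i j ^ 2) ≤ σ + D := by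
      intro i
      set ψ := WithLp.linearEquiv 2 ℝ (Fin N → ℝ) with hψdef
      have hBeq : (fun j => Bmat i j) = (fun j => Amat i j) - (fun j => Cmat i j) := by
        funext j
        have := congrFun (congrFun (congrArg (fun M : Matrix (Fin N) (Fin N) ℝ => M) hABC) i) j
        simp only [hABC]
        simp [Matrix.add_apply, Pi.sub_apply]
      have h2 : ‖ψ.symm (fun j => Bmat i j)‖ ≤
          ‖ψ.symm (fun j => Amat i j)‖ + ‖ψ.symm (fun j => Cmat i j)‖ := by
        rw [hBeq, map_sub]
        exact norm_sub_le _ _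
      rw [enorm, enorm, enorm] at h2
      calc Real.sqrt (∑ j, Bmat i j ^ 2) ≤ _ := h2
        _ ≤ σ + D := add_le_add (rowA i) (rowC i)
    -- diagonal and triangularity
    have hdiag : ∀ i : Fin N, Amat i i = ‖yv (n + i)‖ := by
      intro i
      have hu : u (n + i) = (u (n + i) - yv (n + i)) + yv (n + i) := by abel
      have h1 : (inner ℝ (ee i) (u (n + i) - yv (n + i)) : ℝ) = 0 :=
        eperp i _ (hyv1 (n + i))
      have h2 : (inner ℝ (ee i) (yv (n + i)) : ℝ) = ‖yv (n + i)‖⁻¹ * ‖yv (n + i)‖ ^ 2 := by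
        rw [heedef]
        simp only [real_inner_smul_left]
        rw [real_inner_self_eq_norm_sq]
      have hyn0 : ‖yv (n + i)‖ ≠ 0 := norm_ne_zero_iff.mpr (hyne i)
      calc Amat i i = (inner ℝ (ee i) (u (n + i)) : ℝ) := rfl
        _ = (inner ℝ (ee i) ((u (n + i) - yv (n + i)) + yv (n + i)) : ℝ) := by rw [← hu]
        _ = ‖yv (n + i)‖⁻¹ * ‖yv (n + i)‖ ^ 2 := by rw [inner_add_right, h1, h2, zero_add]
        _ = ‖yv (n + i)‖ := by field_simp [sq]
    have htri : Amat.BlockTriangular OrderDual.toDual := by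
      intro i j hij
      have hij' : (i : ℕ) < (j : ℕ) := hij
      refine eperp j _ (greedySpace_mono u (by omega : n + (i : ℕ) + 1 ≤ n + (j : ℕ)) ?_)
      exact Submodule.subset_span ⟨n + (i : ℕ), by simp only [Set.mem_setOf_eq]; omega, rfl⟩
    have hdet_eq : Amat.det = ∏ i, Amat i i := Matrix.det_of_lowerTriangular _ htri
    -- assembling the contradiction
    set tq : ℝ := (κ : ℝ) ^ 2 * ((κ : ℝ) + 1) with htqdef
    have htq1 : 1 ≤ tq := by nlinarith
    have hprod_lb : (2 / (κ : ℝ) * σ) ^ N ≤ ∏ i, Amat i i := by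
      calc (2 / (κ : ℝ) * σ) ^ N = ∏ _i : Fin N, (2 / (κ : ℝ) * σ) := by
            rw [Finset.prod_const, Finset.card_univ, Fintype.card_fin]
        _ ≤ ∏ i, Amat i i := by
            refine Finset.prod_le_prod (fun i _ => hβpos.le) (fun i _ => ?_)
            rw [hdiag i]
            exact hylb i
    have happ := det_bound Bmat Cmat W hWrank hBW (σ + D) D tq
      (by linarith) hD0 htq1 rowB rowC
    have hchain : (2 / (κ : ℝ) * σ) ^ N ≤ tq ^ m * ((σ + D) / tq + D) ^ N := by
      calc (2 / (κ : ℝ) * σ) ^ N ≤ ∏ i, Amat i i := hprod_lb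
        _ = Amat.det := hdet_eq.symm
        _ ≤ |Amat.det| := le_abs_self _
        _ = |(Bmat + Cmat).det| := by rw [hABC]
        _ ≤ _ := happ
    -- numeric estimates
    have htqpos : 0 < tq := by linarith
    have hinner : (σ + D) / tq + D ≤ σ / (κ : ℝ) * (1 + 1 / (κ : ℝ) ^ 2) := by
      have e1 : (σ + σ / (κ : ℝ)) / tq + σ / (κ : ℝ) =
          σ / (κ : ℝ) * (1 + 1 / (κ : ℝ) ^ 2) := by
        rw [htqdef]
        field_simp
        ring
      have e2 : (σ + D) / tq + D ≤ (σ + σ / (κ : ℝ)) / tq + σ / (κ : ℝ) := by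
        gcongr
      linarith
    have hinner0 : 0 ≤ (σ + D) / tq + D := by positivity
    have h6 : tq ^ m * ((σ + D) / tq + D) ^ N ≤
        tq ^ m * (σ / (κ : ℝ) * (1 + 1 / (κ : ℝ) ^ 2)) ^ N := by
      gcongr
    have h7 : (σ / (κ : ℝ) * (1 + 1 / (κ : ℝ) ^ 2)) ^ N =
        (σ / (κ : ℝ)) ^ N * ((1 + 1 / (κ : ℝ) ^ 2) ^ (κ ^ 2)) ^ m := by
      rw [mul_pow, ← pow_mul]
    have h8 : ((1 + 1 / (κ : ℝ) ^ 2) ^ (κ ^ 2)) ≤ 3 := by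
      have h0 := one_add_inv_pow_le (κ ^ 2) (Nat.one_le_pow 2 κ hκpos)
      have hcast : ((κ ^ 2 : ℕ) : ℝ) = (κ : ℝ) ^ 2 := by push_cast; ring
      rw [hcast] at h0
      exact h0
    have hP : 0 < (σ / (κ : ℝ)) ^ N := by positivity
    have h9 : (2 / (κ : ℝ) * σ) ^ N = ((2 : ℝ) ^ (κ ^ 2)) ^ m * (σ / (κ : ℝ)) ^ N := by
      have : 2 / (κ : ℝ) * σ = 2 * (σ / (κ : ℝ)) := by ring
      rw [this, mul_pow, ← pow_mul]
    have h10 : ((2 : ℝ) ^ (κ ^ 2)) ^ m * (σ / (κ : ℝ)) ^ N ≤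
        (3 * tq) ^ m * (σ / (κ : ℝ)) ^ N := by
      have hA1 : tq ^ m * (σ / (κ : ℝ) * (1 + 1 / (κ : ℝ) ^ 2)) ^ N ≤
          (3 * tq) ^ m * (σ / (κ : ℝ)) ^ N := by
        rw [h7, mul_pow (3 : ℝ) tq m]
        calc tq ^ m * ((σ / (κ : ℝ)) ^ N * ((1 + 1 / (κ : ℝ) ^ 2) ^ (κ ^ 2)) ^ m)
            ≤ tq ^ m * ((σ / (κ : ℝ)) ^ N * 3 ^ m) := by gcongr
          _ = 3 ^ m * tq ^ m * (σ / (κ : ℝ)) ^ N := by ring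
      calc ((2 : ℝ) ^ (κ ^ 2)) ^ m * (σ / (κ : ℝ)) ^ N = (2 / (κ : ℝ) * σ) ^ N := h9.symm
        _ ≤ tq ^ m * ((σ + D) / tq + D) ^ N := hchain
        _ ≤ tq ^ m * (σ / (κ : ℝ) * (1 + 1 / (κ : ℝ) ^ 2)) ^ N := h6
        _ ≤ _ := hA1
    have h11 : ((2 : ℝ) ^ (κ ^ 2)) ^ m ≤ (3 * tq) ^ m :=
      le_of_mul_le_mul_right h10 hP
    have h12 : (3 * tq) ^ m < ((2 : ℝ) ^ (κ ^ 2)) ^ m := by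
      have hnat := nat_key κ hκ3
      have hR : 3 * tq < (2 : ℝ) ^ (κ ^ 2) := by
        have : ((3 * κ ^ 2 * (κ + 1) : ℕ) : ℝ) < ((2 ^ (κ ^ 2) : ℕ) : ℝ) := by
          exact_mod_cast hnat
        push_cast at this
        rw [htqdef]
        nlinarith [this]
      exact pow_lt_pow_left₀ hR (by positivity) (by omega)
    linarith
  have hstep : σ / (κ : ℝ) ≤ kolWidth K m := by
    haveI := hNm
    refine le_ciInf fun V => ?_
    rw [div_le_iff₀ hκR0]
    have := main V
    linarith [this]
  calc σ = (κ : ℝ) * (σ / (κ : ℝ)) := by field_simp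
    _ ≤ (κ : ℝ) * kolWidth K m := by
      exact mul_le_mul_of_nonneg_left hstep (by positivity)
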